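/- One has the limit formula lim_{z₂ → x⁻²z₁} g(z₁/z₂)·ψ(x z₂/z₁) = 1/((x²;x^{2r})_∞ (x^{2r−2};x^{2r})_∞) · ({x⁴}{x⁸}{x^{2r}}{x^{2r+4}})/({x²}{x⁶}{x^{2r+2}}{x^{2r+6}}), where {a} := (a; x⁴,x⁴,x^{2r})_∞. -/

import Mathlib

noncomputable section

/-- q-Pochhammer symbol (a;p)_inf. -/
def qp (a p : ℝ) : ℝ := ∏' k : ℕ, (1 - a * p ^ k)

/-- Double q-Pochhammer symbol (a;p1,p2)_inf. -/
def qp2 (a p₁ p₂ : ℝ) : ℝ := ∏' k : ℕ × ℕ, (1 - a * p₁ ^ k.1 * p₂ ^ k.2)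

/-- Triple q-Pochhammer symbol (a;p1,p2,p3)_inf. -/
def qp3 (a p₁ p₂ p₃ : ℝ) : ℝ :=
  ∏' k : ℕ × ℕ × ℕ, (1 - a * p₁ ^ k.1 * p₂ ^ k.2.1 * p₃ ^ k.2.2)

/-- Theta function Θ_p(z). -/
def theta (p z : ℝ) : ℝ := qp z p * qp (p * z⁻¹) p * qp p p

/-- The bracket symbol [u]. -/
def br (x r u : ℝ) : ℝ := x ^ (u ^ 2 / r - u) * theta (x ^ (2 * r)) (x ^ (2 * u))

/-- The brace symbol {u}. -/
def cbr (x r u : ℝ) : ℝ := x ^ (u ^ 2 / r - u) * theta (x ^ (2 * r)) (-(x ^ (2 * u)))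

/-- The kernel function ψ. -/
def psi (x r t : ℝ) : ℝ :=
  qp2 (x ^ (2 * r + 3) * t) (x ^ 4) (x ^ (2 * r)) *
    qp2 (x ^ (2 * r + 3) * t⁻¹) (x ^ 4) (x ^ (2 * r)) /
  (qp2 (x * t) (x ^ 4) (x ^ (2 * r)) * qp2 (x * t⁻¹) (x ^ 4) (x ^ (2 * r)))

/-- The function g given by a ratio of triple infinite products. -/
def gg (x r z : ℝ) : ℝ :=
  (qp3 (x ^ 6 * z) (x ^ 4) (x ^ 4) (x ^ (2 * r)) *
    qp3 (x ^ 2 * z⁻¹) (x ^ 4) (x ^ 4) (x ^ (2 * r)) *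
    qp3 (x ^ (2 * r + 6) * z) (x ^ 4) (x ^ 4) (x ^ (2 * r)) *
    qp3 (x ^ (2 * r + 2) * z⁻¹) (x ^ 4) (x ^ 4) (x ^ (2 * r))) /
  (qp3 (x ^ 8 * z) (x ^ 4) (x ^ 4) (x ^ (2 * r)) *
    qp3 (x ^ 4 * z⁻¹) (x ^ 4) (x ^ 4) (x ^ (2 * r)) *
    qp3 (x ^ (2 * r + 4) * z) (x ^ 4) (x ^ 4) (x ^ (2 * r)) *
    qp3 (x ^ (2 * r) * z⁻¹) (x ^ 4) (x ^ 4) (x ^ (2 * r)))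

open Filter Topology

namespace GPsiAux

lemma norm_log_one_sub_le {y q : ℝ} (h0 : 0 ≤ y) (hyq : y ≤ q) (hq : q < 1) :
    ‖Real.log (1 - y)‖ ≤ (1 - q)⁻¹ * y := by
  have hq0 : (0:ℝ) < 1 - q := by linarith
  have hy1 : (0:ℝ) < 1 - y := by linarith
  rw [Real.norm_eq_abs, abs_of_nonpos (Real.log_nonpos (by linarith) (by linarith)),
    ← Real.log_inv]
  have h1 := Real.log_le_sub_one_of_pos (inv_pos.mpr hy1)
  have h2 : (1 - y)⁻¹ - 1 = y / (1 - y) := by field_simp; ring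
  have h3 : y / (1 - y) ≤ y / (1 - q) := by gcongr <;> linarith
  calc Real.log (1 - y)⁻¹ ≤ (1 - y)⁻¹ - 1 := h1
    _ = y / (1 - y) := h2
    _ ≤ y / (1 - q) := h3
    _ = (1 - q)⁻¹ * y := by rw [inv_mul_eq_div]

variable {ι : Type*}

lemma summable_log (c : ι → ℝ) {q : ℝ} (hc : Summable c) (h0 : ∀ k, 0 ≤ c k)
    (hq : ∀ k, c k ≤ q) (hq1 : q < 1) :
    Summable fun k => Real.log (1 - c k) :=
  Summable.of_norm_bounded (hc.mul_left (1 - q)⁻¹)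
    fun k => norm_log_one_sub_le (h0 k) (hq k) hq1

lemma tprod_exp (c : ι → ℝ) {q : ℝ} (hc : Summable c) (h0 : ∀ k, 0 ≤ c k)
    (hq : ∀ k, c k ≤ q) (hq1 : q < 1) :
    ∏' k, (1 - c k) = Real.exp (∑' k, Real.log (1 - c k)) := by
  have hpos : ∀ (_ : Unit) (k : ι), 0 < 1 - c k := fun _ k => by have := hq k; linarith
  have := Real.rexp_tsum_eq_tprod (f := fun k => 1 - c k) (hpos ())
    (summable_log c hc h0 hq hq1)
  exact this.symm

lemma tprod_pos (c : ι → ℝ) {q : ℝ} (hc : Summable c) (h0 : ∀ k, 0 ≤ c k)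
    (hq : ∀ k, c k ≤ q) (hq1 : q < 1) :
    0 < ∏' k, (1 - c k) := by
  rw [tprod_exp c hc h0 hq hq1]; exact Real.exp_pos _

lemma multipliable_one_sub (c : ι → ℝ) {q : ℝ} (hc : Summable c) (h0 : ∀ k, 0 ≤ c k)
    (hq : ∀ k, c k ≤ q) (hq1 : q < 1) :
    Multipliable fun k => 1 - c k :=
  Real.multipliable_of_summable_log
    (fun k => by show (0:ℝ) < 1 - c k; have := hq k; linarith)
    (summable_log c hc h0 hq hq1)

lemma continuousAt_tprod (c : ι → ℝ) {C z₀ : ℝ} (hc : Summable c) (h0 : ∀ k, 0 ≤ c k)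
    (hC : ∀ k, c k ≤ C) (hz : 0 < z₀) (h1 : C * z₀ < 1) :
    ContinuousAt (fun z => ∏' k, (1 - c k * z)) z₀ := by
  rcases isEmpty_or_nonempty ι with hι | hι
  · have : (fun z : ℝ => ∏' k : ι, (1 - c k * z)) = fun _ => 1 := by
      funext z; exact tprod_empty
    rw [this]; exact continuousAt_const
  have hC0 : 0 ≤ C := le_trans (h0 (Classical.arbitrary ι)) (hC _)
  have hden : (0:ℝ) < 1 + C * z₀ := by positivity
  set t₁ : ℝ := 2 * z₀ / (1 + C * z₀) with ht₁
  have hzt : z₀ < t₁ := by rw [ht₁, lt_div_iff₀ hden]; nlinarith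
  have ht₁0 : 0 < t₁ := hz.trans hzt
  have hq1 : C * t₁ < 1 := by
    rw [ht₁, ← mul_div_assoc, div_lt_one hden]; nlinarith
  set q : ℝ := C * t₁ with hqdef
  have hq0 : 0 ≤ q := mul_nonneg hC0 ht₁0.le
  set m : ℝ → ℝ := fun z => max 0 (min z t₁) with hm
  have hmcont : Continuous m := continuous_const.max (continuous_id.min continuous_const)
  have hm0 : ∀ z, 0 ≤ m z := fun z => le_max_left _ _
  have hmt : ∀ z, m z ≤ t₁ := fun z => max_le ht₁0.le (min_le_right _ _)
  have hb1 : ∀ k z, 0 ≤ c k * m z := fun k z => mul_nonneg (h0 k) (hm0 z)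
  have hb2 : ∀ k z, c k * m z ≤ q := fun k z => mul_le_mul (hC k) (hmt z) (hm0 z) hC0
  have hpos : ∀ z k, 0 < 1 - c k * m z := fun z k => by have := hb2 k z; linarith
  have heq : (fun z => ∏' k, (1 - c k * m z)) =
      fun z => Real.exp (∑' k, Real.log (1 - c k * m z)) := by
    funext z
    exact tprod_exp _ (hc.mul_right _) (fun k => hb1 k z) (fun k => hb2 k z) hq1
  have hcont : Continuous fun z => ∑' k, Real.log (1 - c k * m z) := by
    refine continuous_tsum (u := fun k => (1 - q)⁻¹ * (c k * t₁)) ?_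
      (((hc.mul_right t₁).mul_left _)) ?_
    · intro k
      exact (continuous_const.sub (continuous_const.mul hmcont)).log
        fun z => (hpos z k).ne'
    · intro k z
      calc ‖Real.log (1 - c k * m z)‖ ≤ (1 - q)⁻¹ * (c k * m z) :=
            norm_log_one_sub_le (hb1 k z) (hb2 k z) hq1
        _ ≤ (1 - q)⁻¹ * (c k * t₁) := by
            have h1q : (0:ℝ) < 1 - q := by linarith
            gcongr
            · exact h0 k
            · exact hmt z
  have hcontP : ContinuousAt (fun z => ∏' k, (1 - c k * m z)) z₀ := by
    rw [heq]; exact (Real.continuous_exp.comp hcont).continuousAt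
  apply hcontP.congr
  filter_upwards [Ioo_mem_nhds hz hzt] with z hz'
  have hmz : m z = z := by
    rw [hm]; simp only
    rw [min_eq_left hz'.2.le, max_eq_right hz'.1.le]
  rw [hmz]

lemma tsum_slice {γ : Type*} (f : ℕ × γ → ℝ) (hf : Summable f) :
    ∑' k, f k = (∑' c, f (0, c)) + ∑' k : ℕ × γ, f (k.1 + 1, k.2) := by
  have hg : Summable fun k : ℕ × γ => f (k.1 + 1, k.2) := by
    have hinj : Function.Injective (fun k : ℕ × γ => (k.1 + 1, k.2)) := by
      intro a b h
      simp only [Prod.mk.injEq] at h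
      rw [Prod.ext_iff]; exact ⟨by omega, h.2⟩
    exact hf.comp_injective hinj
  rw [Summable.tsum_prod' hf (fun b => hf.prod_factor b),
    Summable.tsum_eq_zero_add ⟨_, hf.hasSum.prod_fiberwise fun b => (hf.prod_factor b).hasSum⟩]
  congr 1
  exact (Summable.tsum_prod' hg (fun b => hg.prod_factor b)).symm



section PU

variable {p u : ℝ}

lemma summable_c2 (hp0 : 0 ≤ p) (hp1 : p < 1) (hu0 : 0 ≤ u) (hu1 : u < 1) (a : ℝ) :
    Summable fun k : ℕ × ℕ => a * p ^ k.1 * u ^ k.2 := by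
  have h := (summable_geometric_of_lt_one hp0 hp1).mul_of_nonneg
    (summable_geometric_of_lt_one hu0 hu1) (fun n => pow_nonneg hp0 n)
    (fun n => pow_nonneg hu0 n)
  exact (h.mul_left a).congr fun k => by ring

lemma summable_c3 (hp0 : 0 ≤ p) (hp1 : p < 1) (hu0 : 0 ≤ u) (hu1 : u < 1) (a : ℝ) :
    Summable fun k : ℕ × ℕ × ℕ => a * p ^ k.1 * p ^ k.2.1 * u ^ k.2.2 := by
  have h := (summable_geometric_of_lt_one hp0 hp1).mul_of_nonneg
    (summable_c2 hp0 hp1 hu0 hu1 1) (fun n => pow_nonneg hp0 n)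
    (fun k => by positivity)
  exact (h.mul_left a).congr fun k => by ring

lemma c3_nonneg (hp0 : 0 ≤ p) (hu0 : 0 ≤ u) {a : ℝ} (ha : 0 ≤ a) (k : ℕ × ℕ × ℕ) :
    0 ≤ a * p ^ k.1 * p ^ k.2.1 * u ^ k.2.2 := by positivity

lemma c2_nonneg (hp0 : 0 ≤ p) (hu0 : 0 ≤ u) {a : ℝ} (ha : 0 ≤ a) (k : ℕ × ℕ) :
    0 ≤ a * p ^ k.1 * u ^ k.2 := by positivity

lemma c3_le (hp0 : 0 ≤ p) (hp1 : p ≤ 1) (hu0 : 0 ≤ u) (hu1 : u ≤ 1) {a : ℝ} (ha : 0 ≤ a)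
    (k : ℕ × ℕ × ℕ) : a * p ^ k.1 * p ^ k.2.1 * u ^ k.2.2 ≤ a :=
  calc a * p ^ k.1 * p ^ k.2.1 * u ^ k.2.2
      ≤ a * p ^ k.1 * p ^ k.2.1 := mul_le_of_le_one_right (by positivity) (pow_le_one₀ hu0 hu1)
    _ ≤ a * p ^ k.1 := mul_le_of_le_one_right (by positivity) (pow_le_one₀ hp0 hp1)
    _ ≤ a := mul_le_of_le_one_right ha (pow_le_one₀ hp0 hp1)

lemma c2_le (hp0 : 0 ≤ p) (hp1 : p ≤ 1) (hu0 : 0 ≤ u) (hu1 : u ≤ 1) {a : ℝ} (ha : 0 ≤ a)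
    (k : ℕ × ℕ) : a * p ^ k.1 * u ^ k.2 ≤ a :=
  calc a * p ^ k.1 * u ^ k.2
      ≤ a * p ^ k.1 := mul_le_of_le_one_right (by positivity) (pow_le_one₀ hu0 hu1)
    _ ≤ a := mul_le_of_le_one_right ha (pow_le_one₀ hp0 hp1)

lemma trip_le (hp0 : 0 ≤ p) (hp1 : p ≤ 1) (hu0 : 0 ≤ u) (hu1 : u ≤ 1) (k : ℕ × ℕ × ℕ) :
    (if k = 0 then (0:ℝ) else p ^ k.1 * p ^ k.2.1 * u ^ k.2.2) ≤ max p u := by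
  rcases k with ⟨i, j, l⟩
  split_ifs with h
  · exact le_trans hp0 (le_max_left p u)
  · have h' : i ≠ 0 ∨ j ≠ 0 ∨ l ≠ 0 := by
      by_contra hc; push_neg at hc
      exact h (by simp [Prod.ext_iff, hc.1, hc.2.1, hc.2.2])
    rcases h' with hi | hj | hl
    · refine le_trans ?_ (le_max_left p u)
      calc p ^ i * p ^ j * u ^ l
          ≤ p ^ i * p ^ j := mul_le_of_le_one_right (by positivity) (pow_le_one₀ hu0 hu1)
        _ ≤ p ^ i := mul_le_of_le_one_right (by positivity) (pow_le_one₀ hp0 hp1)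
        _ ≤ p := pow_le_of_le_one hp0 hp1 hi
    · refine le_trans ?_ (le_max_left p u)
      calc p ^ i * p ^ j * u ^ l
          ≤ p ^ i * p ^ j := mul_le_of_le_one_right (by positivity) (pow_le_one₀ hu0 hu1)
        _ ≤ 1 * p := mul_le_mul (pow_le_one₀ hp0 hp1) (pow_le_of_le_one hp0 hp1 hj)
            (by positivity) zero_le_one
        _ = p := one_mul p
    · refine le_trans ?_ (le_max_right p u)
      calc p ^ i * p ^ j * u ^ l
          ≤ 1 * u ^ l := mul_le_mul_of_nonneg_right
            (mul_le_one₀ (pow_le_one₀ hp0 hp1) (by positivity) (pow_le_one₀ hp0 hp1))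
            (by positivity)
        _ = u ^ l := one_mul _
        _ ≤ u := pow_le_of_le_one hu0 hu1 hl

lemma pair_le (hp0 : 0 ≤ p) (hp1 : p ≤ 1) (hu0 : 0 ≤ u) (hu1 : u ≤ 1) (k : ℕ × ℕ) :
    (if k = 0 then (0:ℝ) else p ^ k.1 * u ^ k.2) ≤ max p u := by
  rcases k with ⟨i, l⟩
  split_ifs with h
  · exact le_trans hp0 (le_max_left p u)
  · have h' : i ≠ 0 ∨ l ≠ 0 := by
      by_contra hc; push_neg at hc
      exact h (by simp [Prod.ext_iff, hc.1, hc.2])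
    rcases h' with hi | hl
    · refine le_trans ?_ (le_max_left p u)
      calc p ^ i * u ^ l ≤ p ^ i := mul_le_of_le_one_right (by positivity) (pow_le_one₀ hu0 hu1)
        _ ≤ p := pow_le_of_le_one hp0 hp1 hi
    · refine le_trans ?_ (le_max_right p u)
      calc p ^ i * u ^ l ≤ 1 * u ^ l :=
            mul_le_mul_of_nonneg_right (pow_le_one₀ hp0 hp1) (by positivity)
        _ = u ^ l := one_mul _
        _ ≤ u := pow_le_of_le_one hu0 hu1 hl

lemma trip_nonneg (hp0 : 0 ≤ p) (hu0 : 0 ≤ u) (k : ℕ × ℕ × ℕ) :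
    0 ≤ (if k = 0 then (0:ℝ) else p ^ k.1 * p ^ k.2.1 * u ^ k.2.2) := by
  split_ifs
  · exact le_refl 0
  · positivity

lemma pair_nonneg (hp0 : 0 ≤ p) (hu0 : 0 ≤ u) (k : ℕ × ℕ) :
    0 ≤ (if k = 0 then (0:ℝ) else p ^ k.1 * u ^ k.2) := by
  split_ifs
  · exact le_refl 0
  · positivity

lemma summable_trip (hp0 : 0 ≤ p) (hp1 : p < 1) (hu0 : 0 ≤ u) (hu1 : u < 1) :
    Summable fun k : ℕ × ℕ × ℕ => (if k = 0 then (0:ℝ) else p ^ k.1 * p ^ k.2.1 * u ^ k.2.2) := by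
  have hs : Summable (fun k : ℕ × ℕ × ℕ => p ^ k.1 * p ^ k.2.1 * u ^ k.2.2) :=
    (summable_c3 hp0 hp1 hu0 hu1 1).congr fun k => by ring
  refine Summable.of_nonneg_of_le (trip_nonneg hp0 hu0) (fun k => ?_) hs
  split_ifs
  · positivity
  · exact le_refl _

lemma summable_pair (hp0 : 0 ≤ p) (hp1 : p < 1) (hu0 : 0 ≤ u) (hu1 : u < 1) :
    Summable fun k : ℕ × ℕ => (if k = 0 then (0:ℝ) else p ^ k.1 * u ^ k.2) := by
  have hs : Summable (fun k : ℕ × ℕ => p ^ k.1 * u ^ k.2) :=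
    (summable_c2 hp0 hp1 hu0 hu1 1).congr fun k => by ring
  refine Summable.of_nonneg_of_le (pair_nonneg hp0 hu0) (fun k => ?_) hs
  split_ifs
  · positivity
  · exact le_refl _

end PU
section PU2

variable {p u : ℝ}

lemma lemL1 (hp0 : 0 ≤ p) (hp1 : p < 1) (hu0 : 0 ≤ u) (hu1 : u < 1) {a : ℝ}
    (ha0 : 0 ≤ a) (ha1 : a < 1) :
    (∑' k : ℕ × ℕ × ℕ, Real.log (1 - a * p ^ k.1 * p ^ k.2.1 * u ^ k.2.2)) =
      (∑' k : ℕ × ℕ, Real.log (1 - a * p ^ k.1 * u ^ k.2)) +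
      ∑' k : ℕ × ℕ × ℕ, Real.log (1 - (a * p) * p ^ k.1 * p ^ k.2.1 * u ^ k.2.2) := by
  have hS : Summable fun k : ℕ × ℕ × ℕ => Real.log (1 - a * p ^ k.1 * p ^ k.2.1 * u ^ k.2.2) :=
    summable_log _ (summable_c3 hp0 hp1 hu0 hu1 a) (c3_nonneg hp0 hu0 ha0)
      (c3_le hp0 hp1.le hu0 hu1.le ha0) ha1
  rw [tsum_slice _ hS]
  congr 1
  · exact tsum_congr fun k => by norm_num
  · exact tsum_congr fun k => by
      rw [show a * p ^ (k.1 + 1) * p ^ k.2.1 * u ^ k.2.2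
          = (a * p) * p ^ k.1 * p ^ k.2.1 * u ^ k.2.2 by rw [pow_succ]; ring]

lemma lemL2 (hp0 : 0 ≤ p) (hp1 : p < 1) (hu0 : 0 ≤ u) (hu1 : u < 1) {a : ℝ}
    (ha0 : 0 ≤ a) (ha1 : a < 1) :
    (∑' k : ℕ × ℕ, Real.log (1 - a * p ^ k.1 * u ^ k.2)) =
      (∑' k : ℕ, Real.log (1 - a * u ^ k)) +
      ∑' k : ℕ × ℕ, Real.log (1 - (a * p) * p ^ k.1 * u ^ k.2) := by
  have hS : Summable fun k : ℕ × ℕ => Real.log (1 - a * p ^ k.1 * u ^ k.2) :=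
    summable_log _ (summable_c2 hp0 hp1 hu0 hu1 a) (c2_nonneg hp0 hu0 ha0)
      (c2_le hp0 hp1.le hu0 hu1.le ha0) ha1
  rw [tsum_slice _ hS]
  congr 1
  · exact tsum_congr fun k => by norm_num
  · exact tsum_congr fun k => by
      rw [show a * p ^ (k.1 + 1) * u ^ k.2 = (a * p) * p ^ k.1 * u ^ k.2 by rw [pow_succ]; ring]

lemma lemL3 (hp0 : 0 ≤ p) (hp1 : p < 1) (hu0 : 0 ≤ u) (hu1 : u < 1) :
    (∑' k : ℕ × ℕ × ℕ,
        Real.log (1 - (if k = 0 then (0:ℝ) else p ^ k.1 * p ^ k.2.1 * u ^ k.2.2))) =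
      (∑' k : ℕ × ℕ, Real.log (1 - (if k = 0 then (0:ℝ) else p ^ k.1 * u ^ k.2))) +
      ∑' k : ℕ × ℕ × ℕ, Real.log (1 - p * p ^ k.1 * p ^ k.2.1 * u ^ k.2.2) := by
  have hmax1 : max p u < 1 := max_lt hp1 hu1
  have hS : Summable fun k : ℕ × ℕ × ℕ =>
      Real.log (1 - (if k = 0 then (0:ℝ) else p ^ k.1 * p ^ k.2.1 * u ^ k.2.2)) :=
    summable_log _ (summable_trip hp0 hp1 hu0 hu1) (trip_nonneg hp0 hu0)
      (trip_le hp0 hp1.le hu0 hu1.le) hmax1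
  rw [tsum_slice _ hS]
  congr 1
  · refine tsum_congr fun k => ?_
    have h1 : ((0, k.1, k.2) : ℕ × ℕ × ℕ) = 0 ↔ (k : ℕ × ℕ) = 0 := by
      simp [Prod.ext_iff]
    by_cases hk : (k : ℕ × ℕ) = 0
    · simp [hk]
    · rw [if_neg (by simpa [h1] using hk), if_neg hk]
      norm_num
  · refine tsum_congr fun k => ?_
    rw [if_neg (by simp [Prod.ext_iff]),
      show p ^ (k.1 + 1) * p ^ k.2.1 * u ^ k.2.2
          = p * p ^ k.1 * p ^ k.2.1 * u ^ k.2.2 by rw [pow_succ]; ring]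

/-- Identity (I): splitting off one `p`-slice of the triple product. -/
lemma idT3 (hp0 : 0 ≤ p) (hp1 : p < 1) (hu0 : 0 ≤ u) (hu1 : u < 1) {a : ℝ}
    (ha0 : 0 ≤ a) (ha1 : a < 1) :
    qp3 a p p u = qp2 a p u * qp3 (a * p) p p u := by
  have hap0 : 0 ≤ a * p := by positivity
  have hap1 : a * p < 1 := by nlinarith
  unfold qp3 qp2
  rw [tprod_exp _ (summable_c3 hp0 hp1 hu0 hu1 a) (c3_nonneg hp0 hu0 ha0)
      (c3_le hp0 hp1.le hu0 hu1.le ha0) ha1,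
    tprod_exp _ (summable_c2 hp0 hp1 hu0 hu1 a) (c2_nonneg hp0 hu0 ha0)
      (c2_le hp0 hp1.le hu0 hu1.le ha0) ha1,
    tprod_exp _ (summable_c3 hp0 hp1 hu0 hu1 (a * p)) (c3_nonneg hp0 hu0 hap0)
      (c3_le hp0 hp1.le hu0 hu1.le hap0) hap1,
    ← Real.exp_add, lemL1 hp0 hp1 hu0 hu1 ha0 ha1]

/-- Identity (II): splitting off the `p`-slice of the double product. -/
lemma idT2 (hp0 : 0 ≤ p) (hp1 : p < 1) (hu0 : 0 ≤ u) (hu1 : u < 1) {a : ℝ}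
    (ha0 : 0 ≤ a) (ha1 : a < 1) :
    qp2 a p u = qp a u * qp2 (a * p) p u := by
  have hap0 : 0 ≤ a * p := by positivity
  have hap1 : a * p < 1 := by nlinarith
  have hsum1 : Summable fun k : ℕ => a * u ^ k :=
    (summable_geometric_of_lt_one hu0 hu1).mul_left a
  unfold qp2 qp
  rw [tprod_exp _ (summable_c2 hp0 hp1 hu0 hu1 a) (c2_nonneg hp0 hu0 ha0)
      (c2_le hp0 hp1.le hu0 hu1.le ha0) ha1,
    tprod_exp _ hsum1 (fun k => by positivity)
      (fun k => mul_le_of_le_one_right ha0 (pow_le_one₀ hu0 hu1.le)) ha1,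
    tprod_exp _ (summable_c2 hp0 hp1 hu0 hu1 (a * p)) (c2_nonneg hp0 hu0 hap0)
      (c2_le hp0 hp1.le hu0 hu1.le hap0) hap1,
    ← Real.exp_add, lemL2 hp0 hp1 hu0 hu1 ha0 ha1]

/-- Identity (III): the primed (zero-factor-removed) version. -/
lemma idT3' (hp0 : 0 ≤ p) (hp1 : p < 1) (hu0 : 0 ≤ u) (hu1 : u < 1) :
    (∏' k : ℕ × ℕ × ℕ, (1 - (if k = 0 then (0:ℝ) else p ^ k.1 * p ^ k.2.1 * u ^ k.2.2))) =
      (∏' k : ℕ × ℕ, (1 - (if k = 0 then (0:ℝ) else p ^ k.1 * u ^ k.2))) *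
        qp3 p p p u := by
  have hmax1 : max p u < 1 := max_lt hp1 hu1
  have hpp1 : p * p < 1 := by nlinarith
  unfold qp3
  rw [tprod_exp _ (summable_trip hp0 hp1 hu0 hu1) (trip_nonneg hp0 hu0)
      (trip_le hp0 hp1.le hu0 hu1.le) hmax1,
    tprod_exp _ (summable_pair hp0 hp1 hu0 hu1) (pair_nonneg hp0 hu0)
      (pair_le hp0 hp1.le hu0 hu1.le) hmax1,
    tprod_exp _ (summable_c3 hp0 hp1 hu0 hu1 p) (c3_nonneg hp0 hu0 hp0)
      (c3_le hp0 hp1.le hu0 hu1.le hp0) hp1,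
    ← Real.exp_add, lemL3 hp0 hp1 hu0 hu1]

/-- Positivity of the triple product. -/
lemma posT3 (hp0 : 0 ≤ p) (hp1 : p < 1) (hu0 : 0 ≤ u) (hu1 : u < 1) {a : ℝ}
    (ha0 : 0 ≤ a) (ha1 : a < 1) : 0 < qp3 a p p u :=
  tprod_pos _ (summable_c3 hp0 hp1 hu0 hu1 a) (c3_nonneg hp0 hu0 ha0)
    (c3_le hp0 hp1.le hu0 hu1.le ha0) ha1

lemma posT2 (hp0 : 0 ≤ p) (hp1 : p < 1) (hu0 : 0 ≤ u) (hu1 : u < 1) {a : ℝ}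
    (ha0 : 0 ≤ a) (ha1 : a < 1) : 0 < qp2 a p u :=
  tprod_pos _ (summable_c2 hp0 hp1 hu0 hu1 a) (c2_nonneg hp0 hu0 ha0)
    (c2_le hp0 hp1.le hu0 hu1.le ha0) ha1

lemma posT1 (hu0 : 0 ≤ u) (hu1 : u < 1) {a : ℝ} (ha0 : 0 ≤ a) (ha1 : a < 1) :
    0 < qp a u :=
  tprod_pos _ ((summable_geometric_of_lt_one hu0 hu1).mul_left a) (fun k => by positivity)
    (fun k => mul_le_of_le_one_right ha0 (pow_le_one₀ hu0 hu1.le)) ha1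

lemma posT2' (hp0 : 0 ≤ p) (hp1 : p < 1) (hu0 : 0 ≤ u) (hu1 : u < 1) :
    0 < ∏' k : ℕ × ℕ, (1 - (if k = 0 then (0:ℝ) else p ^ k.1 * u ^ k.2)) :=
  tprod_pos _ (summable_pair hp0 hp1 hu0 hu1) (pair_nonneg hp0 hu0)
    (pair_le hp0 hp1.le hu0 hu1.le) (max_lt hp1 hu1)

end PU2
section PU3

variable {p u : ℝ}

/-- Factor out the `k = 0` term of the triple product. -/
lemma factor3 (hp0 : 0 ≤ p) (hp1 : p < 1) (hu0 : 0 ≤ u) (hu1 : u < 1) {a z : ℝ}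
    (ha : 0 ≤ a) (hz : 0 < z) (hbound : a * max p u * z < 1) :
    qp3 (a * z) p p u = (1 - a * z) *
      ∏' k : ℕ × ℕ × ℕ,
        (1 - (if k = 0 then (0:ℝ) else a * p ^ k.1 * p ^ k.2.1 * u ^ k.2.2) * z) := by
  have hcnn : ∀ k : ℕ × ℕ × ℕ,
      0 ≤ (if k = 0 then (0:ℝ) else a * p ^ k.1 * p ^ k.2.1 * u ^ k.2.2) * z := by
    intro k
    refine mul_nonneg ?_ hz.le
    split_ifs
    · exact le_refl 0
    · positivity
  have hcle : ∀ k : ℕ × ℕ × ℕ,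
      (if k = 0 then (0:ℝ) else a * p ^ k.1 * p ^ k.2.1 * u ^ k.2.2) * z
        ≤ a * max p u * z := by
    intro k
    have h1 : (if k = 0 then (0:ℝ) else a * p ^ k.1 * p ^ k.2.1 * u ^ k.2.2)
        = a * (if k = 0 then (0:ℝ) else p ^ k.1 * p ^ k.2.1 * u ^ k.2.2) := by
      split_ifs <;> ring
    rw [h1]
    have := trip_le hp0 hp1.le hu0 hu1.le k
    have h2 : a * (if k = 0 then (0:ℝ) else p ^ k.1 * p ^ k.2.1 * u ^ k.2.2)
        ≤ a * max p u := mul_le_mul_of_nonneg_left this ha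
    exact mul_le_mul_of_nonneg_right h2 hz.le
  have hcsum : Summable fun k : ℕ × ℕ × ℕ =>
      (if k = 0 then (0:ℝ) else a * p ^ k.1 * p ^ k.2.1 * u ^ k.2.2) * z := by
    apply Summable.mul_right
    have hs : Summable (fun k : ℕ × ℕ × ℕ => a * p ^ k.1 * p ^ k.2.1 * u ^ k.2.2) :=
      summable_c3 hp0 hp1 hu0 hu1 a
    refine Summable.of_nonneg_of_le (fun k => ?_) (fun k => ?_) hs
    · split_ifs
      · exact le_refl 0
      · positivity
    · split_ifs
      · positivity
      · exact le_refl _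
  have hMh : Multipliable fun k : ℕ × ℕ × ℕ =>
      1 - (if k = 0 then (0:ℝ) else a * p ^ k.1 * p ^ k.2.1 * u ^ k.2.2) * z :=
    multipliable_one_sub _ hcsum hcnn hcle hbound
  have hfgh : (fun k : ℕ × ℕ × ℕ => 1 - (a * z) * p ^ k.1 * p ^ k.2.1 * u ^ k.2.2) =
      fun k => (if k = 0 then (1 - a * z) else 1) *
        (1 - (if k = 0 then (0:ℝ) else a * p ^ k.1 * p ^ k.2.1 * u ^ k.2.2) * z) := by
    funext k
    rcases eq_or_ne k 0 with hk | hk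
    · subst hk; simp
    · rw [if_neg hk, if_neg hk]; ring
  unfold qp3
  rw [hfgh, Multipliable.tprod_mul ⟨_, hasProd_ite_eq 0 (1 - a * z)⟩ hMh,
    (hasProd_ite_eq 0 (1 - a * z)).tprod_eq]

/-- Factor out the `k = 0` term of the double product. -/
lemma factor2 (hp0 : 0 ≤ p) (hp1 : p < 1) (hu0 : 0 ≤ u) (hu1 : u < 1) {a z : ℝ}
    (ha : 0 ≤ a) (hz : 0 < z) (hbound : a * max p u * z < 1) :
    qp2 (a * z) p u = (1 - a * z) *
      ∏' k : ℕ × ℕ, (1 - (if k = 0 then (0:ℝ) else a * p ^ k.1 * u ^ k.2) * z) := by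
  have hcnn : ∀ k : ℕ × ℕ,
      0 ≤ (if k = 0 then (0:ℝ) else a * p ^ k.1 * u ^ k.2) * z := by
    intro k
    refine mul_nonneg ?_ hz.le
    split_ifs
    · exact le_refl 0
    · positivity
  have hcle : ∀ k : ℕ × ℕ,
      (if k = 0 then (0:ℝ) else a * p ^ k.1 * u ^ k.2) * z ≤ a * max p u * z := by
    intro k
    have h1 : (if k = 0 then (0:ℝ) else a * p ^ k.1 * u ^ k.2)
        = a * (if k = 0 then (0:ℝ) else p ^ k.1 * u ^ k.2) := by
      split_ifs <;> ring
    rw [h1]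
    have := pair_le hp0 hp1.le hu0 hu1.le k
    have h2 : a * (if k = 0 then (0:ℝ) else p ^ k.1 * u ^ k.2) ≤ a * max p u :=
      mul_le_mul_of_nonneg_left this ha
    exact mul_le_mul_of_nonneg_right h2 hz.le
  have hcsum : Summable fun k : ℕ × ℕ =>
      (if k = 0 then (0:ℝ) else a * p ^ k.1 * u ^ k.2) * z := by
    apply Summable.mul_right
    have hs : Summable (fun k : ℕ × ℕ => a * p ^ k.1 * u ^ k.2) :=
      summable_c2 hp0 hp1 hu0 hu1 a
    refine Summable.of_nonneg_of_le (fun k => ?_) (fun k => ?_) hs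
    · split_ifs
      · exact le_refl 0
      · positivity
    · split_ifs
      · positivity
      · exact le_refl _
  have hMh : Multipliable fun k : ℕ × ℕ =>
      1 - (if k = 0 then (0:ℝ) else a * p ^ k.1 * u ^ k.2) * z :=
    multipliable_one_sub _ hcsum hcnn hcle hbound
  have hfgh : (fun k : ℕ × ℕ => 1 - (a * z) * p ^ k.1 * u ^ k.2) =
      fun k => (if k = 0 then (1 - a * z) else 1) *
        (1 - (if k = 0 then (0:ℝ) else a * p ^ k.1 * u ^ k.2) * z) := by
    funext k
    rcases eq_or_ne k 0 with hk | hk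
    · subst hk; simp
    · rw [if_neg hk, if_neg hk]; ring
  unfold qp2
  rw [hfgh, Multipliable.tprod_mul ⟨_, hasProd_ite_eq 0 (1 - a * z)⟩ hMh,
    (hasProd_ite_eq 0 (1 - a * z)).tprod_eq]

/-- Continuity of `v ↦ qp3 (a*v) p p u`. -/
lemma contT3 (hp0 : 0 ≤ p) (hp1 : p < 1) (hu0 : 0 ≤ u) (hu1 : u < 1) {a v₀ : ℝ}
    (ha : 0 ≤ a) (hv : 0 < v₀) (h1 : a * v₀ < 1) :
    ContinuousAt (fun v => qp3 (a * v) p p u) v₀ := by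
  have : (fun v => qp3 (a * v) p p u) =
      fun v => ∏' k : ℕ × ℕ × ℕ, (1 - (a * p ^ k.1 * p ^ k.2.1 * u ^ k.2.2) * v) := by
    funext v; unfold qp3; exact tprod_congr fun k => by ring_nf
  rw [this]
  exact continuousAt_tprod _ (summable_c3 hp0 hp1 hu0 hu1 a) (c3_nonneg hp0 hu0 ha)
    (c3_le hp0 hp1.le hu0 hu1.le ha) hv h1

/-- Continuity of `v ↦ qp2 (a*v) p u`. -/
lemma contT2 (hp0 : 0 ≤ p) (hp1 : p < 1) (hu0 : 0 ≤ u) (hu1 : u < 1) {a v₀ : ℝ}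
    (ha : 0 ≤ a) (hv : 0 < v₀) (h1 : a * v₀ < 1) :
    ContinuousAt (fun v => qp2 (a * v) p u) v₀ := by
  have : (fun v => qp2 (a * v) p u) =
      fun v => ∏' k : ℕ × ℕ, (1 - (a * p ^ k.1 * u ^ k.2) * v) := by
    funext v; unfold qp2; exact tprod_congr fun k => by ring_nf
  rw [this]
  exact continuousAt_tprod _ (summable_c2 hp0 hp1 hu0 hu1 a) (c2_nonneg hp0 hu0 ha)
    (c2_le hp0 hp1.le hu0 hu1.le ha) hv h1

/-- Continuity of the primed triple product in `v`. -/
lemma contF3 (hp0 : 0 ≤ p) (hp1 : p < 1) (hu0 : 0 ≤ u) (hu1 : u < 1) {a v₀ : ℝ}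
    (ha : 0 ≤ a) (hv : 0 < v₀) (h1 : a * max p u * v₀ < 1) :
    ContinuousAt (fun v => ∏' k : ℕ × ℕ × ℕ,
      (1 - (if k = 0 then (0:ℝ) else a * p ^ k.1 * p ^ k.2.1 * u ^ k.2.2) * v)) v₀ := by
  refine continuousAt_tprod _ ?_ ?_ (C := a * max p u) ?_ hv h1
  · have hs : Summable (fun k : ℕ × ℕ × ℕ => a * p ^ k.1 * p ^ k.2.1 * u ^ k.2.2) :=
      summable_c3 hp0 hp1 hu0 hu1 a
    refine Summable.of_nonneg_of_le (fun k => ?_) (fun k => ?_) hs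
    · split_ifs
      · exact le_refl 0
      · positivity
    · split_ifs
      · positivity
      · exact le_refl _
  · intro k; split_ifs
    · exact le_refl 0
    · positivity
  · intro k
    have h1' : (if k = 0 then (0:ℝ) else a * p ^ k.1 * p ^ k.2.1 * u ^ k.2.2)
        = a * (if k = 0 then (0:ℝ) else p ^ k.1 * p ^ k.2.1 * u ^ k.2.2) := by
      split_ifs <;> ring
    rw [h1']
    exact mul_le_mul_of_nonneg_left (trip_le hp0 hp1.le hu0 hu1.le k) ha

/-- Continuity of the primed double product in `v`. -/
lemma contG2 (hp0 : 0 ≤ p) (hp1 : p < 1) (hu0 : 0 ≤ u) (hu1 : u < 1) {a v₀ : ℝ}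
    (ha : 0 ≤ a) (hv : 0 < v₀) (h1 : a * max p u * v₀ < 1) :
    ContinuousAt (fun v => ∏' k : ℕ × ℕ,
      (1 - (if k = 0 then (0:ℝ) else a * p ^ k.1 * u ^ k.2) * v)) v₀ := by
  refine continuousAt_tprod _ ?_ ?_ (C := a * max p u) ?_ hv h1
  · have hs : Summable (fun k : ℕ × ℕ => a * p ^ k.1 * u ^ k.2) :=
      summable_c2 hp0 hp1 hu0 hu1 a
    refine Summable.of_nonneg_of_le (fun k => ?_) (fun k => ?_) hs
    · split_ifs
      · exact le_refl 0
      · positivity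
    · split_ifs
      · positivity
      · exact le_refl _
  · intro k; split_ifs
    · exact le_refl 0
    · positivity
  · intro k
    have h1' : (if k = 0 then (0:ℝ) else a * p ^ k.1 * u ^ k.2)
        = a * (if k = 0 then (0:ℝ) else p ^ k.1 * u ^ k.2) := by
      split_ifs <;> ring
    rw [h1']
    exact mul_le_mul_of_nonneg_left (pair_le hp0 hp1.le hu0 hu1.le k) ha

/-- Positivity of the primed products with the scaling. -/
lemma posF3 (hp0 : 0 ≤ p) (hp1 : p < 1) (hu0 : 0 ≤ u) (hu1 : u < 1) {a v : ℝ}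
    (ha : 0 ≤ a) (hv : 0 < v) (h1 : a * max p u * v < 1) :
    0 < ∏' k : ℕ × ℕ × ℕ,
      (1 - (if k = 0 then (0:ℝ) else a * p ^ k.1 * p ^ k.2.1 * u ^ k.2.2) * v) := by
  refine tprod_pos _ ?_ ?_ (q := a * max p u * v) ?_ h1
  · apply Summable.mul_right
    have hs : Summable (fun k : ℕ × ℕ × ℕ => a * p ^ k.1 * p ^ k.2.1 * u ^ k.2.2) :=
      summable_c3 hp0 hp1 hu0 hu1 a
    refine Summable.of_nonneg_of_le (fun k => ?_) (fun k => ?_) hs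
    · split_ifs
      · exact le_refl 0
      · positivity
    · split_ifs
      · positivity
      · exact le_refl _
  · intro k
    refine mul_nonneg ?_ hv.le
    split_ifs
    · exact le_refl 0
    · positivity
  · intro k
    have h1' : (if k = 0 then (0:ℝ) else a * p ^ k.1 * p ^ k.2.1 * u ^ k.2.2)
        = a * (if k = 0 then (0:ℝ) else p ^ k.1 * p ^ k.2.1 * u ^ k.2.2) := by
      split_ifs <;> ring
    rw [h1']
    exact mul_le_mul_of_nonneg_right
      (mul_le_mul_of_nonneg_left (trip_le hp0 hp1.le hu0 hu1.le k) ha) hv.le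

lemma posG2 (hp0 : 0 ≤ p) (hp1 : p < 1) (hu0 : 0 ≤ u) (hu1 : u < 1) {a v : ℝ}
    (ha : 0 ≤ a) (hv : 0 < v) (h1 : a * max p u * v < 1) :
    0 < ∏' k : ℕ × ℕ, (1 - (if k = 0 then (0:ℝ) else a * p ^ k.1 * u ^ k.2) * v) := by
  refine tprod_pos _ ?_ ?_ (q := a * max p u * v) ?_ h1
  · apply Summable.mul_right
    have hs : Summable (fun k : ℕ × ℕ => a * p ^ k.1 * u ^ k.2) :=
      summable_c2 hp0 hp1 hu0 hu1 a
    refine Summable.of_nonneg_of_le (fun k => ?_) (fun k => ?_) hs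
    · split_ifs
      · exact le_refl 0
      · positivity
    · split_ifs
      · positivity
      · exact le_refl _
  · intro k
    refine mul_nonneg ?_ hv.le
    split_ifs
    · exact le_refl 0
    · positivity
  · intro k
    have h1' : (if k = 0 then (0:ℝ) else a * p ^ k.1 * u ^ k.2)
        = a * (if k = 0 then (0:ℝ) else p ^ k.1 * u ^ k.2) := by
      split_ifs <;> ring
    rw [h1']
    exact mul_le_mul_of_nonneg_right
      (mul_le_mul_of_nonneg_left (pair_le hp0 hp1.le hu0 hu1.le k) ha) hv.le

/-- The algebraic cancellation of the simple zero against the simple pole. -/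
lemma cancel_aux {s A F C D E M1 M2 G N : ℝ} (hs : s ≠ 0) :
    A * (s * F) * C * D / E * (M1 * M2 / (s * G * N)) =
      A * F * C * D / E * (M1 * M2 / (G * N)) := by
  rw [div_mul_div_comm, div_mul_div_comm,
    show A * (s * F) * C * D * (M1 * M2) = s * (A * F * C * D * (M1 * M2)) by ring,
    show E * (s * G * N) = s * (E * (G * N)) by ring,
    mul_div_mul_left _ _ hs, ← div_mul_div_comm]

end PU3
lemma final_alg (Q1 Q2 Q3 Q4 Q5 Q6 Q7 Q8 Q9 Q10 Q11 Q12 : ℝ)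
    (n1 : Q1 ≠ 0) (n2 : Q2 ≠ 0) (n4 : Q4 ≠ 0) (n6 : Q6 ≠ 0) (n8 : Q8 ≠ 0)
    (n10 : Q10 ≠ 0) (n11 : Q11 ≠ 0) :
    1 / (Q1 * Q2) * (Q3 * Q9 * Q9 * (Q5 * (Q7 * Q12)) * (Q7 * Q12)) /
      (Q1 * Q4 * (Q4 * Q10) * (Q4 * Q10) * (Q6 * Q11) * Q11) =
    Q9 * (Q8 * (Q3 * Q9)) * Q12 * (Q5 * (Q7 * Q12)) /
      (Q10 * (Q1 * Q4 * (Q4 * Q10)) * Q11 * (Q2 * Q6 * (Q6 * Q11))) *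
      (Q6 * Q7 / (Q8 * (Q1 * Q4))) := by
  field_simp


end GPsiAux

section MainTheorem

open GPsiAux

/-- The limit formula for g(z₁/z₂) ψ(x z₂/z₁) as z₂ → x⁻² z₁. -/
theorem g_psi_limit (x r z₁ : ℝ) (hx0 : 0 < x) (hx1 : x < 1) (hr : 1 < r) (hz : 0 < z₁) :
    Tendsto (fun z₂ : ℝ => gg x r (z₁ / z₂) * psi x r (x * z₂ / z₁))
      (𝓝[≠] ((x ^ 2)⁻¹ * z₁))
      (𝓝 (1 / (qp (x ^ 2) (x ^ (2 * r)) * qp (x ^ (2 * r - 2)) (x ^ (2 * r))) *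
        (qp3 (x ^ 4) (x ^ 4) (x ^ 4) (x ^ (2 * r)) * qp3 (x ^ 8) (x ^ 4) (x ^ 4) (x ^ (2 * r)) *
          qp3 (x ^ (2 * r)) (x ^ 4) (x ^ 4) (x ^ (2 * r)) *
          qp3 (x ^ (2 * r + 4)) (x ^ 4) (x ^ 4) (x ^ (2 * r))) /
        (qp3 (x ^ 2) (x ^ 4) (x ^ 4) (x ^ (2 * r)) * qp3 (x ^ 6) (x ^ 4) (x ^ 4) (x ^ (2 * r)) *
          qp3 (x ^ (2 * r + 2)) (x ^ 4) (x ^ 4) (x ^ (2 * r)) *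
          qp3 (x ^ (2 * r + 6)) (x ^ 4) (x ^ 4) (x ^ (2 * r))))) := by
  have hxne : x ≠ 0 := hx0.ne'
  have hz₁ne : z₁ ≠ 0 := hz.ne'
  have hpow0 : ∀ n : ℕ, 0 < x ^ n := fun n => pow_pos hx0 n
  have hpow1 : ∀ n : ℕ, n ≠ 0 → x ^ n < 1 := fun n hn => pow_lt_one₀ hx0.le hx1 hn
  have hmul1 : ∀ {A B : ℝ}, 0 ≤ A → A < 1 → 0 ≤ B → B < 1 → A * B < 1 := by
    intro A B h1 h2 h3 h4; nlinarith
  set b := x ^ (2 * r) with hbdef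
  have hb0 : 0 < b := Real.rpow_pos_of_pos hx0 _
  have hb1 : b < 1 := Real.rpow_lt_one hx0.le hx1 (by linarith)
  have he0 : 0 < x ^ (2 * r - 2) := Real.rpow_pos_of_pos hx0 _
  have he1 : x ^ (2 * r - 2) < 1 := Real.rpow_lt_one hx0.le hx1 (by linarith)
  have hx4_0 : (0:ℝ) ≤ x ^ 4 := by positivity
  have hx4_1 : x ^ 4 < 1 := hpow1 4 (by norm_num)
  -- rpow bridges
  have hbr2 : x ^ (2 * r + 2) = b * x ^ 2 := by
    rw [hbdef, ← Real.rpow_natCast x 2, ← Real.rpow_add hx0]; norm_num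
  have hbr3 : x ^ (2 * r + 3) = b * x ^ 3 := by
    rw [hbdef, ← Real.rpow_natCast x 3, ← Real.rpow_add hx0]; norm_num
  have hbr4 : x ^ (2 * r + 4) = b * x ^ 4 := by
    rw [hbdef, ← Real.rpow_natCast x 4, ← Real.rpow_add hx0]; norm_num
  have hbr6 : x ^ (2 * r + 6) = b * x ^ 6 := by
    rw [hbdef, ← Real.rpow_natCast x 6, ← Real.rpow_add hx0]; norm_num
  have hsub : x ^ (2 * r - 2) * x ^ 2 = b := by
    rw [hbdef, ← Real.rpow_natCast x 2, ← Real.rpow_add hx0]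
    congr 1; push_cast; ring
  set z₂₀ := (x ^ 2)⁻¹ * z₁ with hz₂₀def
  have hz₂₀pos : 0 < z₂₀ := by rw [hz₂₀def]; positivity
  have hv' : z₁ / z₂₀ = x ^ 2 := by
    rw [hz₂₀def, inv_mul_eq_div, div_div_eq_mul_div, mul_comm z₁ (x ^ 2), mul_div_assoc,
      div_self hz₁ne, mul_one]
  have hv : z₂₀ / z₁ = (x ^ 2)⁻¹ := by
    rw [hz₂₀def, mul_div_assoc, div_self hz₁ne, mul_one]
  have hM0 : 0 < max (x ^ 4) b := lt_max_of_lt_left (hpow0 4)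
  have hM1 : max (x ^ 4) b < 1 := max_lt hx4_1 hb1
  have hx2ne : (x:ℝ) ^ 2 ≠ 0 := by positivity
  have h9 : x ^ 2 * max (x ^ 4) b * (x ^ 2)⁻¹ = max (x ^ 4) b := by
    rw [mul_comm (x ^ 2) (max (x ^ 4) b), mul_assoc, mul_inv_cancel₀ hx2ne, mul_one]
  -- the eventual set
  have hSopen : IsOpen {z₂ : ℝ | 0 < z₂ / z₁ ∧ x ^ 2 * max (x ^ 4) b * (z₂ / z₁) < 1} := by
    have hc : Continuous fun z₂ : ℝ => z₂ / z₁ := continuous_id.div_const z₁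
    rw [Set.setOf_and]
    exact (isOpen_lt continuous_const hc).inter
      (isOpen_lt (continuous_const.mul hc) continuous_const)
  have hmemS : z₂₀ ∈ {z₂ : ℝ | 0 < z₂ / z₁ ∧ x ^ 2 * max (x ^ 4) b * (z₂ / z₁) < 1} := by
    constructor
    · rw [hv]; positivity
    · rw [hv, h9]; exact hM1
  -- the regular factor function
  refine Tendsto.congr' (f₁ := fun z₂ : ℝ =>
    (qp3 (x ^ 6 * (z₁ / z₂)) (x ^ 4) (x ^ 4) b *
        (∏' k : ℕ × ℕ × ℕ, (1 - (if k = 0 then (0:ℝ)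
          else x ^ 2 * (x ^ 4) ^ k.1 * (x ^ 4) ^ k.2.1 * b ^ k.2.2) * (z₂ / z₁))) *
      qp3 (b * x ^ 6 * (z₁ / z₂)) (x ^ 4) (x ^ 4) b *
      qp3 (b * x ^ 2 * (z₂ / z₁)) (x ^ 4) (x ^ 4) b) /
    (qp3 (x ^ 8 * (z₁ / z₂)) (x ^ 4) (x ^ 4) b *
      qp3 (x ^ 4 * (z₂ / z₁)) (x ^ 4) (x ^ 4) b *
      qp3 (b * x ^ 4 * (z₁ / z₂)) (x ^ 4) (x ^ 4) b *
      qp3 (b * (z₂ / z₁)) (x ^ 4) (x ^ 4) b) *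
    (qp2 (b * x ^ 4 * (z₂ / z₁)) (x ^ 4) b * qp2 (b * x ^ 2 * (z₁ / z₂)) (x ^ 4) b /
      ((∏' k : ℕ × ℕ, (1 - (if k = 0 then (0:ℝ)
          else x ^ 2 * (x ^ 4) ^ k.1 * b ^ k.2) * (z₂ / z₁))) *
        qp2 (1 * (z₁ / z₂)) (x ^ 4) b))) ?_ ?_
  · -- eventual equality
    filter_upwards [mem_nhdsWithin_of_mem_nhds (hSopen.mem_nhds hmemS),
      self_mem_nhdsWithin] with z₂ hS hne
    obtain ⟨hw0, hwb⟩ := hS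
    have hz₂pos : 0 < z₂ := by
      have h := mul_pos hw0 hz
      rwa [div_mul_cancel₀ _ hz₁ne] at h
    have hz₂ne : z₂ ≠ 0 := hz₂pos.ne'
    have hnz : z₂ ≠ z₂₀ := by simpa using hne
    have hs : 1 - x ^ 2 * (z₂ / z₁) ≠ 0 := by
      intro h
      apply hnz
      have h' : x ^ 2 * z₂ = z₁ := by
        have h'' : x ^ 2 * (z₂ / z₁) = 1 := by linarith
        field_simp at h''
        linarith
      rw [hz₂₀def]
      field_simp
      linarith
    simp only [gg, psi]
    have e1 : x ^ (2 * r + 6) * (z₁ / z₂) = b * x ^ 6 * (z₁ / z₂) := by rw [hbr6]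
    have e2 : (x:ℝ) ^ 2 * (z₁ / z₂)⁻¹ = x ^ 2 * (z₂ / z₁) := by rw [inv_div]
    have e3 : x ^ (2 * r + 2) * (z₁ / z₂)⁻¹ = b * x ^ 2 * (z₂ / z₁) := by
      rw [inv_div, hbr2]
    have e4 : x ^ (2 * r + 4) * (z₁ / z₂) = b * x ^ 4 * (z₁ / z₂) := by rw [hbr4]
    have e5 : (x:ℝ) ^ 4 * (z₁ / z₂)⁻¹ = x ^ 4 * (z₂ / z₁) := by rw [inv_div]
    have e6 : b * (z₁ / z₂)⁻¹ = b * (z₂ / z₁) := by rw [inv_div]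
    have e7 : x ^ (2 * r + 3) * (x * z₂ / z₁) = b * x ^ 4 * (z₂ / z₁) := by
      rw [hbr3]; ring
    have e8 : x ^ (2 * r + 3) * (x * z₂ / z₁)⁻¹ = b * x ^ 2 * (z₁ / z₂) := by
      rw [hbr3, inv_div]
      field_simp
    have e9 : x * (x * z₂ / z₁) = x ^ 2 * (z₂ / z₁) := by ring
    have e10 : x * (x * z₂ / z₁)⁻¹ = 1 * (z₁ / z₂) := by
      rw [inv_div, one_mul]
      field_simp
    rw [e1, e2, e3, e4, e5, e6, e7, e8, e9, e10]
    rw [factor3 hx4_0 hx4_1 hb0.le hb1 (a := x ^ 2) (by positivity) hw0 hwb,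
      factor2 hx4_0 hx4_1 hb0.le hb1 (a := x ^ 2) (by positivity) hw0 hwb]
    exact (cancel_aux hs).symm
  · -- the limit of the regular factor
    have hφ1 : ContinuousAt (fun z₂ : ℝ => z₁ / z₂) z₂₀ :=
      continuousAt_const.div continuousAt_id hz₂₀pos.ne'
    have hφ2 : ContinuousAt (fun z₂ : ℝ => z₂ / z₁) z₂₀ :=
      continuousAt_id.div continuousAt_const hz₁ne
    have hvpos' : 0 < z₁ / z₂₀ := by rw [hv']; positivity
    have hvpos : 0 < z₂₀ / z₁ := by rw [hv]; positivity
    -- argument value facts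
    have ei1 : (x:ℝ) ^ 4 * (x ^ 2)⁻¹ = x ^ 2 := by
      rw [show (x:ℝ) ^ 4 = x ^ 2 * x ^ 2 from by ring, mul_assoc, mul_inv_cancel₀ hx2ne, mul_one]
    have eib : b * (x ^ 2)⁻¹ = x ^ (2 * r - 2) := by
      rw [← hsub, mul_assoc, mul_inv_cancel₀ hx2ne, mul_one]
    have eibx2 : b * x ^ 2 * (x ^ 2)⁻¹ = b := by
      rw [mul_assoc, mul_inv_cancel₀ hx2ne, mul_one]
    have eibx4 : b * x ^ 4 * (x ^ 2)⁻¹ = b * x ^ 2 := by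
      rw [show b * x ^ 4 = b * x ^ 2 * x ^ 2 from by ring, mul_assoc, mul_inv_cancel₀ hx2ne,
        mul_one]
    -- continuity of the twelve pieces
    have d1 : ContinuousAt (fun v : ℝ => qp3 (x ^ 6 * v) (x ^ 4) (x ^ 4) b) (z₁ / z₂₀) := by
      refine contT3 hx4_0 hx4_1 hb0.le hb1 (by positivity) hvpos' ?_
      rw [hv', show (x:ℝ) ^ 6 * x ^ 2 = x ^ 8 from by ring]
      exact hpow1 8 (by norm_num)
    have c1 : ContinuousAt (fun z₂ : ℝ => qp3 (x ^ 6 * (z₁ / z₂)) (x ^ 4) (x ^ 4) b) z₂₀ :=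
      d1.comp hφ1
    have d2 : ContinuousAt (fun v : ℝ => ∏' k : ℕ × ℕ × ℕ, (1 - (if k = 0 then (0:ℝ)
        else x ^ 2 * (x ^ 4) ^ k.1 * (x ^ 4) ^ k.2.1 * b ^ k.2.2) * v)) (z₂₀ / z₁) := by
      refine contF3 hx4_0 hx4_1 hb0.le hb1 (by positivity) hvpos ?_
      rw [hv, h9]; exact hM1
    have c2 : ContinuousAt (fun z₂ : ℝ => ∏' k : ℕ × ℕ × ℕ, (1 - (if k = 0 then (0:ℝ)
        else x ^ 2 * (x ^ 4) ^ k.1 * (x ^ 4) ^ k.2.1 * b ^ k.2.2) * (z₂ / z₁))) z₂₀ :=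
      ContinuousAt.comp (f := fun z₂ : ℝ => z₂ / z₁) (x := z₂₀) d2 hφ2
    have d3 : ContinuousAt (fun v : ℝ => qp3 (b * x ^ 6 * v) (x ^ 4) (x ^ 4) b) (z₁ / z₂₀) := by
      refine contT3 hx4_0 hx4_1 hb0.le hb1 (by positivity) hvpos' ?_
      rw [hv', show b * x ^ 6 * x ^ 2 = b * x ^ 8 from by ring]
      exact hmul1 hb0.le hb1 (hpow0 8).le (hpow1 8 (by norm_num))
    have c3 : ContinuousAt (fun z₂ : ℝ => qp3 (b * x ^ 6 * (z₁ / z₂)) (x ^ 4) (x ^ 4) b) z₂₀ :=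
      d3.comp hφ1
    have d4 : ContinuousAt (fun v : ℝ => qp3 (b * x ^ 2 * v) (x ^ 4) (x ^ 4) b) (z₂₀ / z₁) := by
      refine contT3 hx4_0 hx4_1 hb0.le hb1 (by positivity) hvpos ?_
      rw [hv, eibx2]; exact hb1
    have c4 : ContinuousAt (fun z₂ : ℝ => qp3 (b * x ^ 2 * (z₂ / z₁)) (x ^ 4) (x ^ 4) b) z₂₀ :=
      ContinuousAt.comp (f := fun z₂ : ℝ => z₂ / z₁) (x := z₂₀) d4 hφ2
    have d5 : ContinuousAt (fun v : ℝ => qp3 (x ^ 8 * v) (x ^ 4) (x ^ 4) b) (z₁ / z₂₀) := by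
      refine contT3 hx4_0 hx4_1 hb0.le hb1 (by positivity) hvpos' ?_
      rw [hv', show (x:ℝ) ^ 8 * x ^ 2 = x ^ 10 from by ring]
      exact hpow1 10 (by norm_num)
    have c5 : ContinuousAt (fun z₂ : ℝ => qp3 (x ^ 8 * (z₁ / z₂)) (x ^ 4) (x ^ 4) b) z₂₀ :=
      d5.comp hφ1
    have d6 : ContinuousAt (fun v : ℝ => qp3 (x ^ 4 * v) (x ^ 4) (x ^ 4) b) (z₂₀ / z₁) := by
      refine contT3 hx4_0 hx4_1 hb0.le hb1 (by positivity) hvpos ?_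
      rw [hv, ei1]; exact hpow1 2 (by norm_num)
    have c6 : ContinuousAt (fun z₂ : ℝ => qp3 (x ^ 4 * (z₂ / z₁)) (x ^ 4) (x ^ 4) b) z₂₀ :=
      ContinuousAt.comp (f := fun z₂ : ℝ => z₂ / z₁) (x := z₂₀) d6 hφ2
    have d7 : ContinuousAt (fun v : ℝ => qp3 (b * x ^ 4 * v) (x ^ 4) (x ^ 4) b) (z₁ / z₂₀) := by
      refine contT3 hx4_0 hx4_1 hb0.le hb1 (by positivity) hvpos' ?_
      rw [hv', show b * x ^ 4 * x ^ 2 = b * x ^ 6 from by ring]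
      exact hmul1 hb0.le hb1 (hpow0 6).le (hpow1 6 (by norm_num))
    have c7 : ContinuousAt (fun z₂ : ℝ => qp3 (b * x ^ 4 * (z₁ / z₂)) (x ^ 4) (x ^ 4) b) z₂₀ :=
      d7.comp hφ1
    have d8 : ContinuousAt (fun v : ℝ => qp3 (b * v) (x ^ 4) (x ^ 4) b) (z₂₀ / z₁) := by
      refine contT3 hx4_0 hx4_1 hb0.le hb1 hb0.le hvpos ?_
      rw [hv, eib]; exact he1
    have c8 : ContinuousAt (fun z₂ : ℝ => qp3 (b * (z₂ / z₁)) (x ^ 4) (x ^ 4) b) z₂₀ :=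
      ContinuousAt.comp (f := fun z₂ : ℝ => z₂ / z₁) (x := z₂₀) d8 hφ2
    have d9 : ContinuousAt (fun v : ℝ => qp2 (b * x ^ 4 * v) (x ^ 4) b) (z₂₀ / z₁) := by
      refine contT2 hx4_0 hx4_1 hb0.le hb1 (by positivity) hvpos ?_
      rw [hv, eibx4]
      exact hmul1 hb0.le hb1 (hpow0 2).le (hpow1 2 (by norm_num))
    have c9 : ContinuousAt (fun z₂ : ℝ => qp2 (b * x ^ 4 * (z₂ / z₁)) (x ^ 4) b) z₂₀ :=
      ContinuousAt.comp (f := fun z₂ : ℝ => z₂ / z₁) (x := z₂₀) d9 hφ2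
    have d10 : ContinuousAt (fun v : ℝ => qp2 (b * x ^ 2 * v) (x ^ 4) b) (z₁ / z₂₀) := by
      refine contT2 hx4_0 hx4_1 hb0.le hb1 (by positivity) hvpos' ?_
      rw [hv', show b * x ^ 2 * x ^ 2 = b * x ^ 4 from by ring]
      exact hmul1 hb0.le hb1 (hpow0 4).le (hpow1 4 (by norm_num))
    have c10 : ContinuousAt (fun z₂ : ℝ => qp2 (b * x ^ 2 * (z₁ / z₂)) (x ^ 4) b) z₂₀ :=
      d10.comp hφ1
    have d11 : ContinuousAt (fun v : ℝ => ∏' k : ℕ × ℕ, (1 - (if k = 0 then (0:ℝ)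
        else x ^ 2 * (x ^ 4) ^ k.1 * b ^ k.2) * v)) (z₂₀ / z₁) := by
      refine contG2 hx4_0 hx4_1 hb0.le hb1 (by positivity) hvpos ?_
      rw [hv, h9]; exact hM1
    have c11 : ContinuousAt (fun z₂ : ℝ => ∏' k : ℕ × ℕ, (1 - (if k = 0 then (0:ℝ)
        else x ^ 2 * (x ^ 4) ^ k.1 * b ^ k.2) * (z₂ / z₁))) z₂₀ :=
      ContinuousAt.comp (f := fun z₂ : ℝ => z₂ / z₁) (x := z₂₀) d11 hφ2
    have d12 : ContinuousAt (fun v : ℝ => qp2 (1 * v) (x ^ 4) b) (z₁ / z₂₀) := by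
      refine contT2 hx4_0 hx4_1 hb0.le hb1 zero_le_one hvpos' ?_
      rw [hv', one_mul]; exact hpow1 2 (by norm_num)
    have c12 : ContinuousAt (fun z₂ : ℝ => qp2 (1 * (z₁ / z₂)) (x ^ 4) b) z₂₀ :=
      d12.comp hφ1
    -- positivity of the denominators at the point
    have hq3pos : ∀ {a : ℝ}, 0 ≤ a → a < 1 → 0 < qp3 a (x ^ 4) (x ^ 4) b :=
      fun h1 h2 => posT3 hx4_0 hx4_1 hb0.le hb1 h1 h2
    have hq2pos : ∀ {a : ℝ}, 0 ≤ a → a < 1 → 0 < qp2 a (x ^ 4) b :=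
      fun h1 h2 => posT2 hx4_0 hx4_1 hb0.le hb1 h1 h2
    have hden1 : qp3 (x ^ 8 * (z₁ / z₂₀)) (x ^ 4) (x ^ 4) b *
        qp3 (x ^ 4 * (z₂₀ / z₁)) (x ^ 4) (x ^ 4) b *
        qp3 (b * x ^ 4 * (z₁ / z₂₀)) (x ^ 4) (x ^ 4) b *
        qp3 (b * (z₂₀ / z₁)) (x ^ 4) (x ^ 4) b ≠ 0 := by
      rw [hv', hv, ei1, eib]
      refine ne_of_gt (mul_pos (mul_pos (mul_pos ?_ ?_) ?_) ?_)
      · refine hq3pos (by positivity) ?_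
        rw [show (x:ℝ) ^ 8 * x ^ 2 = x ^ 10 from by ring]
        exact hpow1 10 (by norm_num)
      · exact hq3pos (by positivity) (hpow1 2 (by norm_num))
      · refine hq3pos (by positivity) ?_
        rw [show b * x ^ 4 * x ^ 2 = b * x ^ 6 from by ring]
        exact hmul1 hb0.le hb1 (hpow0 6).le (hpow1 6 (by norm_num))
      · exact hq3pos he0.le he1
    have hden2 : (∏' k : ℕ × ℕ, (1 - (if k = 0 then (0:ℝ)
          else x ^ 2 * (x ^ 4) ^ k.1 * b ^ k.2) * (z₂₀ / z₁))) *
        qp2 (1 * (z₁ / z₂₀)) (x ^ 4) b ≠ 0 := by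
      rw [hv', hv, one_mul]
      refine ne_of_gt (mul_pos ?_ ?_)
      · refine posG2 hx4_0 hx4_1 hb0.le hb1 (by positivity) (by positivity) ?_
        rw [h9]; exact hM1
      · exact hq2pos (by positivity) (hpow1 2 (by norm_num))
    have hT := ((((c1.mul c2).mul c3).mul c4).div ((((c5.mul c6).mul c7).mul c8)) hden1).mul
      ((c9.mul c10).div (c11.mul c12) hden2)
    have h2 : Tendsto (fun z₂ : ℝ =>
        (qp3 (x ^ 6 * (z₁ / z₂)) (x ^ 4) (x ^ 4) b *
            (∏' k : ℕ × ℕ × ℕ, (1 - (if k = 0 then (0:ℝ)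
              else x ^ 2 * (x ^ 4) ^ k.1 * (x ^ 4) ^ k.2.1 * b ^ k.2.2) * (z₂ / z₁))) *
          qp3 (b * x ^ 6 * (z₁ / z₂)) (x ^ 4) (x ^ 4) b *
          qp3 (b * x ^ 2 * (z₂ / z₁)) (x ^ 4) (x ^ 4) b) /
        (qp3 (x ^ 8 * (z₁ / z₂)) (x ^ 4) (x ^ 4) b *
          qp3 (x ^ 4 * (z₂ / z₁)) (x ^ 4) (x ^ 4) b *
          qp3 (b * x ^ 4 * (z₁ / z₂)) (x ^ 4) (x ^ 4) b *
          qp3 (b * (z₂ / z₁)) (x ^ 4) (x ^ 4) b) *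
        (qp2 (b * x ^ 4 * (z₂ / z₁)) (x ^ 4) b * qp2 (b * x ^ 2 * (z₁ / z₂)) (x ^ 4) b /
          ((∏' k : ℕ × ℕ, (1 - (if k = 0 then (0:ℝ)
              else x ^ 2 * (x ^ 4) ^ k.1 * b ^ k.2) * (z₂ / z₁))) *
            qp2 (1 * (z₁ / z₂)) (x ^ 4) b))) (𝓝[≠] z₂₀) (𝓝 (
        (qp3 (x ^ 6 * (z₁ / z₂₀)) (x ^ 4) (x ^ 4) b *
            (∏' k : ℕ × ℕ × ℕ, (1 - (if k = 0 then (0:ℝ)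
              else x ^ 2 * (x ^ 4) ^ k.1 * (x ^ 4) ^ k.2.1 * b ^ k.2.2) * (z₂₀ / z₁))) *
          qp3 (b * x ^ 6 * (z₁ / z₂₀)) (x ^ 4) (x ^ 4) b *
          qp3 (b * x ^ 2 * (z₂₀ / z₁)) (x ^ 4) (x ^ 4) b) /
        (qp3 (x ^ 8 * (z₁ / z₂₀)) (x ^ 4) (x ^ 4) b *
          qp3 (x ^ 4 * (z₂₀ / z₁)) (x ^ 4) (x ^ 4) b *
          qp3 (b * x ^ 4 * (z₁ / z₂₀)) (x ^ 4) (x ^ 4) b *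
          qp3 (b * (z₂₀ / z₁)) (x ^ 4) (x ^ 4) b) *
        (qp2 (b * x ^ 4 * (z₂₀ / z₁)) (x ^ 4) b * qp2 (b * x ^ 2 * (z₁ / z₂₀)) (x ^ 4) b /
          ((∏' k : ℕ × ℕ, (1 - (if k = 0 then (0:ℝ)
              else x ^ 2 * (x ^ 4) ^ k.1 * b ^ k.2) * (z₂₀ / z₁))) *
            qp2 (1 * (z₁ / z₂₀)) (x ^ 4) b)))) := hT.continuousWithinAt
    convert h2 using 2
    -- now the value identity
    rw [hv', hv, ei1, eib, eibx2, eibx4, one_mul]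
    have hF0 : (∏' k : ℕ × ℕ × ℕ, (1 - (if k = 0 then (0:ℝ)
        else x ^ 2 * (x ^ 4) ^ k.1 * (x ^ 4) ^ k.2.1 * b ^ k.2.2) * (x ^ 2)⁻¹)) =
        ∏' k : ℕ × ℕ × ℕ, (1 - (if k = 0 then (0:ℝ)
          else (x ^ 4) ^ k.1 * (x ^ 4) ^ k.2.1 * b ^ k.2.2)) := by
      refine tprod_congr fun k => ?_
      rcases eq_or_ne k 0 with hk | hk
      · simp [hk]
      · rw [if_neg hk, if_neg hk]
        congr 1
        rw [show x ^ 2 * (x ^ 4) ^ k.1 * (x ^ 4) ^ k.2.1 * b ^ k.2.2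
            = (x ^ 4) ^ k.1 * (x ^ 4) ^ k.2.1 * b ^ k.2.2 * x ^ 2 from by ring,
          mul_assoc, mul_inv_cancel₀ hx2ne, mul_one]
    have hG0 : (∏' k : ℕ × ℕ, (1 - (if k = 0 then (0:ℝ)
        else x ^ 2 * (x ^ 4) ^ k.1 * b ^ k.2) * (x ^ 2)⁻¹)) =
        ∏' k : ℕ × ℕ, (1 - (if k = 0 then (0:ℝ) else (x ^ 4) ^ k.1 * b ^ k.2)) := by
      refine tprod_congr fun k => ?_
      rcases eq_or_ne k 0 with hk | hk
      · simp [hk]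
      · rw [if_neg hk, if_neg hk]
        congr 1
        rw [show x ^ 2 * (x ^ 4) ^ k.1 * b ^ k.2
            = (x ^ 4) ^ k.1 * b ^ k.2 * x ^ 2 from by ring,
          mul_assoc, mul_inv_cancel₀ hx2ne, mul_one]
    rw [hF0, hG0]
    rw [show (x:ℝ) ^ 6 * x ^ 2 = x ^ 8 from by ring,
      show b * x ^ 6 * x ^ 2 = b * x ^ 8 from by ring,
      show (x:ℝ) ^ 8 * x ^ 2 = x ^ 10 from by ring,
      show b * x ^ 4 * x ^ 2 = b * x ^ 6 from by ring,
      show b * x ^ 2 * x ^ 2 = b * x ^ 4 from by ring,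
      hbr2, hbr4, hbr6]
    -- identities
    have R10 := idT3' hx4_0 hx4_1 hb0.le hb1
    have R1 := idT3 hx4_0 hx4_1 hb0.le hb1 (a := (x:ℝ) ^ 2) (by positivity)
      (hpow1 2 (by norm_num))
    rw [show (x:ℝ) ^ 2 * x ^ 4 = x ^ 6 from by ring] at R1
    have R2 := idT3 hx4_0 hx4_1 hb0.le hb1 (a := (x:ℝ) ^ 6) (by positivity)
      (hpow1 6 (by norm_num))
    rw [show (x:ℝ) ^ 6 * x ^ 4 = x ^ 10 from by ring] at R2
    have R3 := idT3 hx4_0 hx4_1 hb0.le hb1 (a := (x:ℝ) ^ 4) (by positivity)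
      (hpow1 4 (by norm_num))
    rw [show (x:ℝ) ^ 4 * x ^ 4 = x ^ 8 from by ring] at R3
    have R4 := idT3 hx4_0 hx4_1 hb0.le hb1 (a := b) hb0.le hb1
    have R5 := idT3 hx4_0 hx4_1 hb0.le hb1 (a := b * x ^ 2) (by positivity)
      (hmul1 hb0.le hb1 (hpow0 2).le (hpow1 2 (by norm_num)))
    rw [show b * x ^ 2 * x ^ 4 = b * x ^ 6 from by ring] at R5
    have R6 := idT3 hx4_0 hx4_1 hb0.le hb1 (a := b * x ^ 4) (by positivity)
      (hmul1 hb0.le hb1 (hpow0 4).le (hpow1 4 (by norm_num)))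
    rw [show b * x ^ 4 * x ^ 4 = b * x ^ 8 from by ring] at R6
    have R7 := idT3 hx4_0 hx4_1 hb0.le hb1 (a := x ^ (2 * r - 2)) he0.le he1
    rw [show x ^ (2 * r - 2) * x ^ 4 = b * x ^ 2 from by rw [← hsub]; ring] at R7
    have R8 := idT2 hx4_0 hx4_1 hb0.le hb1 (a := (x:ℝ) ^ 2) (by positivity)
      (hpow1 2 (by norm_num))
    rw [show (x:ℝ) ^ 2 * x ^ 4 = x ^ 6 from by ring] at R8
    have R9 := idT2 hx4_0 hx4_1 hb0.le hb1 (a := x ^ (2 * r - 2)) he0.le he1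
    rw [show x ^ (2 * r - 2) * x ^ 4 = b * x ^ 2 from by rw [← hsub]; ring] at R9
    rw [R10, R1, R2, R3, R7, R5, R4, R6, R8, R9]
    -- nonvanishing of the basis quantities
    have n1 : qp (x ^ 2) b ≠ 0 :=
      (posT1 hb0.le hb1 (by positivity) (hpow1 2 (by norm_num))).ne'
    have n2 : qp (x ^ (2 * r - 2)) b ≠ 0 := (posT1 hb0.le hb1 he0.le he1).ne'
    have n3 : qp2 (x ^ 4) (x ^ 4) b ≠ 0 := (hq2pos (by positivity) hx4_1).ne'
    have n4 : qp2 (x ^ 6) (x ^ 4) b ≠ 0 := (hq2pos (by positivity) (hpow1 6 (by norm_num))).ne'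
    have n5 : qp2 b (x ^ 4) b ≠ 0 := (hq2pos hb0.le hb1).ne'
    have n6 : qp2 (b * x ^ 2) (x ^ 4) b ≠ 0 := (hq2pos (by positivity)
      (hmul1 hb0.le hb1 (hpow0 2).le (hpow1 2 (by norm_num)))).ne'
    have n7 : qp2 (b * x ^ 4) (x ^ 4) b ≠ 0 := (hq2pos (by positivity)
      (hmul1 hb0.le hb1 (hpow0 4).le (hpow1 4 (by norm_num)))).ne'
    have n8 : (∏' k : ℕ × ℕ, (1 - (if k = 0 then (0:ℝ)
        else (x ^ 4) ^ k.1 * b ^ k.2))) ≠ 0 :=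
      (posT2' hx4_0 hx4_1 hb0.le hb1).ne'
    have n9 : qp3 (x ^ 8) (x ^ 4) (x ^ 4) b ≠ 0 :=
      (hq3pos (by positivity) (hpow1 8 (by norm_num))).ne'
    have n10 : qp3 (x ^ 10) (x ^ 4) (x ^ 4) b ≠ 0 :=
      (hq3pos (by positivity) (hpow1 10 (by norm_num))).ne'
    have n11 : qp3 (b * x ^ 6) (x ^ 4) (x ^ 4) b ≠ 0 := (hq3pos (by positivity)
      (hmul1 hb0.le hb1 (hpow0 6).le (hpow1 6 (by norm_num)))).ne'
    have n12 : qp3 (b * x ^ 8) (x ^ 4) (x ^ 4) b ≠ 0 := (hq3pos (by positivity)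
      (hmul1 hb0.le hb1 (hpow0 8).le (hpow1 8 (by norm_num)))).ne'
    set Q1 := qp (x ^ 2) b with hsQ1
    set Q2 := qp (x ^ (2 * r - 2)) b with hsQ2
    set Q3 := qp2 (x ^ 4) (x ^ 4) b with hsQ3
    set Q4 := qp2 (x ^ 6) (x ^ 4) b with hsQ4
    set Q5 := qp2 b (x ^ 4) b with hsQ5
    set Q6 := qp2 (b * x ^ 2) (x ^ 4) b with hsQ6
    set Q7 := qp2 (b * x ^ 4) (x ^ 4) b with hsQ7
    set Q8 := (∏' k : ℕ × ℕ, (1 - (if k = 0 then (0:ℝ)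
      else (x ^ 4) ^ k.1 * b ^ k.2))) with hsQ8
    set Q9 := qp3 (x ^ 8) (x ^ 4) (x ^ 4) b with hsQ9
    set Q10 := qp3 (x ^ 10) (x ^ 4) (x ^ 4) b with hsQ10
    set Q11 := qp3 (b * x ^ 6) (x ^ 4) (x ^ 4) b with hsQ11
    set Q12 := qp3 (b * x ^ 8) (x ^ 4) (x ^ 4) b with hsQ12
    exact final_alg Q1 Q2 Q3 Q4 Q5 Q6 Q7 Q8 Q9 Q10 Q11 Q12 n1 n2 n4 n6 n8 n10 n11
  
end MainTheorem
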